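/- For every monotone Boolean function f : {0,1}^n → {0,1}, the sensitivity of f equals the block sensitivity of f. -/

import Mathlib

/-- Flip the `i`-th bit of `x`. -/
def flipBit {n : ℕ} (x : Fin n → Bool) (i : Fin n) : Fin n → Bool :=
  fun j => if j = i then !x j else x j

/-- Flip all bits of `x` in the block `B`. -/
def flipSet {n : ℕ} (x : Fin n → Bool) (B : Finset (Fin n)) : Fin n → Bool :=
  fun j => if j ∈ B then !x j else x j

/-- Sensitivity of `f` at the input `x`. -/
def sensAt {n : ℕ} (f : (Fin n → Bool) → Bool) (x : Fin n → Bool) : ℕ :=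
  (Finset.univ.filter fun i => f (flipBit x i) ≠ f x).card

/-- Sensitivity of `f`. -/
def sens {n : ℕ} (f : (Fin n → Bool) → Bool) : ℕ :=
  Finset.univ.sup fun x => sensAt f x

/-- 0-sensitivity of `f`: max sensitivity over inputs where `f` is 0. -/
def sens0 {n : ℕ} (f : (Fin n → Bool) → Bool) : ℕ :=
  (Finset.univ.filter fun x => f x = false).sup fun x => sensAt f x

/-- 1-sensitivity of `f`: max sensitivity over inputs where `f` is 1. -/
def sens1 {n : ℕ} (f : (Fin n → Bool) → Bool) : ℕ :=
  (Finset.univ.filter fun x => f x = true).sup fun x => sensAt f x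

/-- Block sensitivity of `f` at `x`: the largest number of pairwise disjoint
nonempty blocks each of whose flips changes the value of `f` at `x`. -/
noncomputable def bsensAt {n : ℕ} (f : (Fin n → Bool) → Bool) (x : Fin n → Bool) : ℕ :=
  sSup {r : ℕ | ∃ B : Fin r → Finset (Fin n),
    (∀ j, (B j).Nonempty ∧ f (flipSet x (B j)) ≠ f x) ∧
    ∀ j j', j ≠ j' → Disjoint (B j) (B j')}

/-- Block sensitivity of `f`. -/
noncomputable def bsens {n : ℕ} (f : (Fin n → Bool) → Bool) : ℕ :=
  Finset.univ.sup fun x => bsensAt f x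

lemma flipSet_singleton {n : ℕ} (x : Fin n → Bool) (i : Fin n) :
    flipSet x {i} = flipBit x i := by
  funext j
  simp [flipSet, flipBit]

lemma blocks_le_sens {n : ℕ} (f : (Fin n → Bool) → Bool)
    (hmono : ∀ x y : Fin n → Bool, (∀ i, x i ≤ y i) → f x ≤ f y)
    (x : Fin n → Bool) (r : ℕ) (B : Fin r → Finset (Fin n))
    (hB : ∀ j, f (flipSet x (B j)) ≠ f x)
    (hdisj : ∀ j j', j ≠ j' → Disjoint (B j) (B j')) :
    r ≤ sens f := by
  classical
  cases hfx : f x with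
  | false =>
    set B' : Fin r → Finset (Fin n) := fun j => (B j).filter (fun i => x i = false) with hB'def
    have hflip : ∀ j, f (flipSet x (B' j)) = true := by
      intro j
      have h1 : f (flipSet x (B j)) = true := by
        have := hB j; rw [hfx] at this; simpa using this
      have hle : ∀ i, flipSet x (B j) i ≤ flipSet x (B' j) i := by
        intro i
        simp only [flipSet, hB'def, Finset.mem_filter]
        by_cases h : i ∈ B j <;> cases hxi : x i <;> simp [h, hxi]
      have := hmono _ _ hle
      rw [h1] at this
      exact le_antisymm (by simp) this
    set Z : Finset (Fin n) := Finset.univ.filter (fun i => x i = false) with hZdef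
    set ψ : Finset (Fin n) → (Fin n → Bool) := fun T i => !(decide (i ∈ T)) with hψdef
    set F : Finset (Finset (Fin n)) :=
      Finset.univ.filter (fun T => T ⊆ Z ∧ f (ψ T) = false) with hFdef
    have hZF : Z ∈ F := by
      have hψZ : ψ Z = x := by
        funext i
        cases hxi : x i <;> simp [hψdef, hZdef, hxi]
      simp only [hFdef, Finset.mem_filter, Finset.mem_univ, true_and]
      exact ⟨subset_rfl, by rw [hψZ, hfx]⟩
    obtain ⟨T, hTF, hTmin⟩ : ∃ T ∈ F, ∀ y ∈ F, ¬ y < T := by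
      obtain ⟨T, hT⟩ := F.exists_minimal ⟨Z, hZF⟩
      exact ⟨T, hT.1, fun y hy hlt => hlt.not_ge (hT.2 hy hlt.le)⟩
    rw [hFdef, Finset.mem_filter] at hTF
    obtain ⟨-, hTZ, hTval⟩ := hTF
    have hsens : ∀ i ∈ T, f (flipBit (ψ T) i) ≠ f (ψ T) := by
      intro i hi
      have h1 : flipBit (ψ T) i = ψ (T.erase i) := by
        funext j
        by_cases h : j = i
        · subst h; simp [flipBit, hψdef, hi]
        · simp [flipBit, hψdef, h, Finset.mem_erase]
      rw [h1, hTval]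
      intro hcontra
      have hmem : T.erase i ∈ F := by
        simp only [hFdef, Finset.mem_filter, Finset.mem_univ, true_and]
        exact ⟨(Finset.erase_subset i T).trans hTZ, hcontra⟩
      exact hTmin _ hmem (Finset.lt_iff_ssubset.mpr (Finset.erase_ssubset hi))
    have hcard : T.card ≤ sens f := by
      have hsub : T ⊆ Finset.univ.filter (fun i => f (flipBit (ψ T) i) ≠ f (ψ T)) := by
        intro i hi
        simp only [Finset.mem_filter, Finset.mem_univ, true_and]
        exact hsens i hi
      calc T.card ≤ sensAt f (ψ T) := Finset.card_le_card hsub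
        _ ≤ sens f := Finset.le_sup (Finset.mem_univ _)
    have hint : ∀ j, (T ∩ B' j).Nonempty := by
      intro j
      by_contra hemp
      rw [Finset.not_nonempty_iff_eq_empty] at hemp
      have hdis : ∀ i ∈ B' j, i ∉ T := by
        intro i hi hiT
        have : i ∈ T ∩ B' j := Finset.mem_inter.mpr ⟨hiT, hi⟩
        simp [hemp] at this
      have hle : ∀ i, flipSet x (B' j) i ≤ ψ T i := by
        intro i
        by_cases h : i ∈ B' j
        · have hxi : x i = false := by
            have := Finset.mem_filter.mp (hB'def ▸ h); exact this.2
          simp [flipSet, hψdef, h, hxi, hdis i h]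
        · by_cases hiT : i ∈ T
          · have hxi : x i = false := by
              have := hTZ hiT; rw [hZdef, Finset.mem_filter] at this; exact this.2
            simp [flipSet, hψdef, h, hiT, hxi]
          · simp [flipSet, hψdef, h, hiT]
      have := hmono _ _ hle
      rw [hflip j, hTval] at this
      exact absurd this (by decide)
    have hrT : r ≤ T.card := by
      have hchoose : ∀ j, (hint j).choose ∈ T ∩ B' j := fun j => (hint j).choose_spec
      have hinj : Function.Injective (fun j => (hint j).choose) := by
        intro j j' h
        replace h : (hint j).choose = (hint j').choose := h
        by_contra hne
        have h1 := Finset.mem_inter.mp (hchoose j)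
        have h2 := Finset.mem_inter.mp (hchoose j')
        have hd : Disjoint (B' j) (B' j') :=
          (hdisj j j' hne).mono (Finset.filter_subset _ _) (Finset.filter_subset _ _)
        exact Finset.disjoint_left.mp hd h1.2 (by rw [h]; exact h2.2)
      calc r = (Finset.univ : Finset (Fin r)).card := by simp
        _ ≤ T.card := Finset.card_le_card_of_injOn (fun j => (hint j).choose)
              (fun j _ => (Finset.mem_inter.mp (hchoose j)).1) (hinj.injOn)
    exact hrT.trans hcard
  | true =>
    set B' : Fin r → Finset (Fin n) := fun j => (B j).filter (fun i => x i = true) with hB'def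
    have hflip : ∀ j, f (flipSet x (B' j)) = false := by
      intro j
      have h1 : f (flipSet x (B j)) = false := by
        have := hB j; rw [hfx] at this; simpa using this
      have hle : ∀ i, flipSet x (B' j) i ≤ flipSet x (B j) i := by
        intro i
        simp only [flipSet, hB'def, Finset.mem_filter]
        by_cases h : i ∈ B j <;> cases hxi : x i <;> simp [h, hxi]
      have := hmono _ _ hle
      rw [h1] at this
      exact le_antisymm this (by simp)
    set Z : Finset (Fin n) := Finset.univ.filter (fun i => x i = true) with hZdef
    set ψ : Finset (Fin n) → (Fin n → Bool) := fun T i => decide (i ∈ T) with hψdef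
    set F : Finset (Finset (Fin n)) :=
      Finset.univ.filter (fun T => T ⊆ Z ∧ f (ψ T) = true) with hFdef
    have hZF : Z ∈ F := by
      have hψZ : ψ Z = x := by
        funext i
        cases hxi : x i <;> simp [hψdef, hZdef, hxi]
      simp only [hFdef, Finset.mem_filter, Finset.mem_univ, true_and]
      exact ⟨subset_rfl, by rw [hψZ, hfx]⟩
    obtain ⟨T, hTF, hTmin⟩ : ∃ T ∈ F, ∀ y ∈ F, ¬ y < T := by
      obtain ⟨T, hT⟩ := F.exists_minimal ⟨Z, hZF⟩
      exact ⟨T, hT.1, fun y hy hlt => hlt.not_ge (hT.2 hy hlt.le)⟩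
    rw [hFdef, Finset.mem_filter] at hTF
    obtain ⟨-, hTZ, hTval⟩ := hTF
    have hsens : ∀ i ∈ T, f (flipBit (ψ T) i) ≠ f (ψ T) := by
      intro i hi
      have h1 : flipBit (ψ T) i = ψ (T.erase i) := by
        funext j
        by_cases h : j = i
        · subst h; simp [flipBit, hψdef, hi]
        · simp [flipBit, hψdef, h, Finset.mem_erase]
      rw [h1, hTval]
      intro hcontra
      have hmem : T.erase i ∈ F := by
        simp only [hFdef, Finset.mem_filter, Finset.mem_univ, true_and]
        exact ⟨(Finset.erase_subset i T).trans hTZ, hcontra⟩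
      exact hTmin _ hmem (Finset.lt_iff_ssubset.mpr (Finset.erase_ssubset hi))
    have hcard : T.card ≤ sens f := by
      have hsub : T ⊆ Finset.univ.filter (fun i => f (flipBit (ψ T) i) ≠ f (ψ T)) := by
        intro i hi
        simp only [Finset.mem_filter, Finset.mem_univ, true_and]
        exact hsens i hi
      calc T.card ≤ sensAt f (ψ T) := Finset.card_le_card hsub
        _ ≤ sens f := Finset.le_sup (Finset.mem_univ _)
    have hint : ∀ j, (T ∩ B' j).Nonempty := by
      intro j
      by_contra hemp
      rw [Finset.not_nonempty_iff_eq_empty] at hemp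
      have hdis : ∀ i ∈ B' j, i ∉ T := by
        intro i hi hiT
        have : i ∈ T ∩ B' j := Finset.mem_inter.mpr ⟨hiT, hi⟩
        simp [hemp] at this
      have hle : ∀ i, ψ T i ≤ flipSet x (B' j) i := by
        intro i
        by_cases hiT : i ∈ T
        · have hxi : x i = true := by
            have := hTZ hiT; rw [hZdef, Finset.mem_filter] at this; exact this.2
          have hnB : i ∉ B' j := fun h => hdis i h hiT
          simp [flipSet, hψdef, hiT, hnB, hxi]
        · simp [flipSet, hψdef, hiT]
      have := hmono _ _ hle
      rw [hflip j, hTval] at this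
      exact absurd this (by decide)
    have hrT : r ≤ T.card := by
      have hchoose : ∀ j, (hint j).choose ∈ T ∩ B' j := fun j => (hint j).choose_spec
      have hinj : Function.Injective (fun j => (hint j).choose) := by
        intro j j' h
        replace h : (hint j).choose = (hint j').choose := h
        by_contra hne
        have h1 := Finset.mem_inter.mp (hchoose j)
        have h2 := Finset.mem_inter.mp (hchoose j')
        have hd : Disjoint (B' j) (B' j') :=
          (hdisj j j' hne).mono (Finset.filter_subset _ _) (Finset.filter_subset _ _)
        exact Finset.disjoint_left.mp hd h1.2 (by rw [h]; exact h2.2)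
      calc r = (Finset.univ : Finset (Fin r)).card := by simp
        _ ≤ T.card := Finset.card_le_card_of_injOn (fun j => (hint j).choose)
              (fun j _ => (Finset.mem_inter.mp (hchoose j)).1) (hinj.injOn)
    exact hrT.trans hcard

lemma bsens_set_bdd {n : ℕ} (f : (Fin n → Bool) → Bool) (x : Fin n → Bool) :
    BddAbove {r : ℕ | ∃ B : Fin r → Finset (Fin n),
    (∀ j, (B j).Nonempty ∧ f (flipSet x (B j)) ≠ f x) ∧
    ∀ j j', j ≠ j' → Disjoint (B j) (B j')} := by
  refine ⟨n, fun r hr => ?_⟩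
  obtain ⟨B, hB, hdisj⟩ := hr
  have hinj : Function.Injective (fun j : Fin r => ((hB j).1).choose) := by
    intro j j' h
    replace h : ((hB j).1).choose = ((hB j').1).choose := h
    by_contra hne
    exact Finset.disjoint_left.mp (hdisj j j' hne) ((hB j).1).choose_spec
      (h ▸ ((hB j').1).choose_spec)
  calc r = Fintype.card (Fin r) := (Fintype.card_fin r).symm
    _ ≤ Fintype.card (Fin n) := Fintype.card_le_of_injective _ hinj
    _ = n := Fintype.card_fin n


/-- For monotone Boolean functions, sensitivity equals block sensitivity. -/
theorem monotone_sens_eq_bsens {n : ℕ} (f : (Fin n → Bool) → Bool)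
    (hmono : ∀ x y : Fin n → Bool, (∀ i, x i ≤ y i) → f x ≤ f y) :
    sens f = bsens f := by
  classical
  apply le_antisymm
  · apply Finset.sup_le
    intro x _
    have hx : sensAt f x ≤ bsensAt f x := by
      apply le_csSup (bsens_set_bdd f x)
      set s : Finset (Fin n) := Finset.univ.filter (fun i => f (flipBit x i) ≠ f x) with hs
      have hcard : s.card = sensAt f x := rfl
      refine ⟨fun j => {(s.orderIsoOfFin hcard j : Fin n)}, ?_, ?_⟩
      · intro j
        refine ⟨Finset.singleton_nonempty _, ?_⟩
        rw [flipSet_singleton]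
        have : ((s.orderIsoOfFin hcard j : Fin n)) ∈ s := (s.orderIsoOfFin hcard j).2
        exact (Finset.mem_filter.mp this).2
      · intro j j' hne
        rw [Finset.disjoint_singleton]
        intro heq
        exact hne ((s.orderIsoOfFin hcard).injective (Subtype.ext heq))
    exact hx.trans (Finset.le_sup (Finset.mem_univ x))
  · apply Finset.sup_le
    intro x _
    apply csSup_le
    · exact ⟨0, Fin.elim0, fun j => j.elim0, fun j => j.elim0⟩
    · intro r hr
      obtain ⟨B, hB, hdisj⟩ := hr
      exact blocks_le_sens f hmono x r B (fun j => (hB j).2) hdisj
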